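/- Let Q be a basket of type 1/r(a, -a, 1) with index r ≥ 26. Then l(Q, 15) > 29. -/
import Mathlib


/-- The Reid correction term `l(r, b, m) = ∑_{j=1}^{m-1} \overline{bj}(r-\overline{bj})/(2r)`,
where `\overline{bj}` is the smallest non-negative residue of `b*j` mod `r`.
(The `j = 0` term vanishes, so we may sum over `j ∈ range m`.) -/
def reidL (r b m : ℕ) : ℚ :=
  ∑ j ∈ Finset.range m,
    (((b * j) % r : ℕ) : ℚ) * ((r : ℚ) - (((b * j) % r : ℕ) : ℚ)) / (2 * r)

/-- A basket of type `1/r(a, -a, 1)`: a pair of integers `(r, a)` with `r ≥ 2`,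
`0 < a < r` and `gcd(a, r) = 1`. -/
structure Basket where
  r : ℕ
  a : ℕ
  two_le_r : 2 ≤ r
  a_pos : 0 < a
  a_lt_r : a < r
  coprime : Nat.Coprime a r

/-- The unique `b` with `0 < b < r` and `a * b ≡ 1 (mod r)`. -/
def Basket.binv (Q : Basket) : ℕ := ((Q.a : ZMod Q.r)⁻¹).val

/-- The correction term `l(Q, m)` of a basket. -/
def Basket.l (Q : Basket) (m : ℕ) : ℚ := reidL Q.r Q.binv m

/-- `Δ_n(Q) := n² l(Q,2) + l(Q,n) - l(Q,n+1)`. -/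
def Basket.delta (Q : Basket) (n : ℕ) : ℚ :=
  (n : ℚ) ^ 2 * Q.l 2 + Q.l n - Q.l (n + 1)

/-- A formal basket datum with `χ = 1`: a finite multiset of baskets together
with a positive rational number `K`. -/
structure FormalDatum where
  B : Multiset Basket
  K : ℚ
  K_pos : 0 < K

/-- The formal plurigenus `P(m) = (1/12)m(m-1)(2m-1)K - (2m-1) + ∑_{Q ∈ B} l(Q, m)`. -/
def FormalDatum.P (D : FormalDatum) (m : ℕ) : ℚ :=
  (1 / 12 : ℚ) * m * (m - 1) * (2 * m - 1) * D.K - (2 * m - 1)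
    + (D.B.map (fun Q => Q.l m)).sum


/-- Lower bound for a sum of `s*(r-s)` over distinct integers in `[1, r/2]`. -/
lemma reid_tri_sum (r : ℕ) (S : Finset ℕ) (hS : ∀ s ∈ S, 1 ≤ s ∧ 2*s ≤ r) :
    ∑ k ∈ Finset.range S.card, (k+1)*(r-(k+1)) ≤ ∑ s ∈ S, s*(r-s) := by
  obtain ⟨n, hn⟩ : ∃ n, S.card = n := ⟨_, rfl⟩
  induction n generalizing S with
  | zero => simp [hn]
  | succ n ih =>
    have hne : S.Nonempty := Finset.card_pos.mp (by omega)
    have hmS : S.max' hne ∈ S := S.max'_mem hne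
    set m := S.max' hne with hm
    have hsub : S ⊆ Finset.Icc 1 m := fun s hs =>
      Finset.mem_Icc.mpr ⟨(hS s hs).1, S.le_max' s hs⟩
    have hcard : n + 1 ≤ m := by
      have := Finset.card_le_card hsub
      rw [Nat.card_Icc] at this
      omega
    have h2m : 2*m ≤ r := (hS m hmS).2
    have hS' : ∀ s ∈ S.erase m, 1 ≤ s ∧ 2*s ≤ r := fun s hs =>
      hS s (Finset.mem_of_mem_erase hs)
    have hc' : (S.erase m).card = n := by
      rw [Finset.card_erase_of_mem hmS, hn]
      omega
    have IH := ih (S.erase m) hS' hc'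
    rw [← Finset.add_sum_erase S _ hmS, hn, Finset.sum_range_succ]
    rw [hc'] at IH
    have hterm : (n+1)*(r-(n+1)) ≤ m*(r-m) := by
      zify [show n+1 ≤ r by omega, show m ≤ r by omega]
      nlinarith [hcard, h2m]
    linarith

/-- The small cases `r = 26, 27, 28`, by decidable check. -/
lemma reid_key_small (r : ℕ) (hr : r = 26 ∨ r = 27 ∨ r = 28) (b : ℕ)
    (hblt : b < r) (hb : Nat.Coprime b r) :
    58 * r < ∑ j ∈ Finset.range 15, (b*j % r) * (r - b*j % r) := by
  rcases hr with rfl | rfl | rfl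
  · exact (by decide : ∀ b' < 26, Nat.Coprime b' 26 →
      58 * 26 < ∑ j ∈ Finset.range 15, (b'*j % 26) * (26 - b'*j % 26)) b hblt hb
  · exact (by decide : ∀ b' < 27, Nat.Coprime b' 27 →
      58 * 27 < ∑ j ∈ Finset.range 15, (b'*j % 27) * (27 - b'*j % 27)) b hblt hb
  · exact (by decide : ∀ b' < 28, Nat.Coprime b' 28 →
      58 * 28 < ∑ j ∈ Finset.range 15, (b'*j % 28) * (28 - b'*j % 28)) b hblt hb

/-- The key natural-number inequality. -/
lemma reid_key (r b : ℕ) (hr : 26 ≤ r) (hblt : b < r) (hb : Nat.Coprime b r) :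
    58 * r < ∑ j ∈ Finset.range 15, (b*j % r) * (r - b*j % r) := by
  rcases lt_or_ge r 29 with hsmall | hbig
  · exact reid_key_small r (by omega) b hblt hb
  · have hr0 : 0 < r := by omega
    have hxlt : ∀ j, b*j % r < r := fun j => Nat.mod_lt _ hr0
    have hx0 : ∀ j ∈ Finset.Icc 1 14, b*j % r ≠ 0 := by
      intro j hj hx
      have hj' := Finset.mem_Icc.mp hj
      have hdvd : r ∣ b * j := Nat.dvd_of_mod_eq_zero hx
      have : r ∣ j := hb.symm.dvd_of_dvd_mul_left hdvd
      have := Nat.le_of_dvd (by omega) this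
      omega
    have hinj : ∀ i ∈ Finset.Icc 1 14, ∀ j ∈ Finset.Icc 1 14,
        min (b*i % r) (r - b*i % r) = min (b*j % r) (r - b*j % r) → i = j := by
      intro i hi j hj hij
      have hi' := Finset.mem_Icc.mp hi
      have hj' := Finset.mem_Icc.mp hj
      have hxi := hxlt i
      have hxj := hxlt j
      have hcase : b*i % r = b*j % r ∨ b*i % r + b*j % r = r := by omega
      rcases hcase with hc | hc
      · have hmod : i ≡ j [MOD r] := Nat.ModEq.cancel_left_of_coprime hb.symm hc
        rw [Nat.ModEq, Nat.mod_eq_of_lt (by omega), Nat.mod_eq_of_lt (by omega)] at hmod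
        exact hmod
      · exfalso
        have hz : (b*i + b*j) % r = 0 := by
          rw [Nat.add_mod, hc, Nat.mod_self]
        have hdvd : r ∣ b * (i + j) := by
          rw [Nat.mul_add]
          exact Nat.dvd_of_mod_eq_zero hz
        have : r ∣ i + j := hb.symm.dvd_of_dvd_mul_left hdvd
        have := Nat.le_of_dvd (by omega) this
        omega
    set y : ℕ → ℕ := fun j => min (b*j % r) (r - b*j % r) with hy
    set S : Finset ℕ := (Finset.Icc 1 14).image y with hSdef
    have hcard : S.card = 14 := by
      rw [hSdef, Finset.card_image_of_injOn (fun i hi j hj h => hinj i (by simpa using hi) j (by simpa using hj) h)]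
      simp
    have hSmem : ∀ s ∈ S, 1 ≤ s ∧ 2*s ≤ r := by
      intro s hs
      rw [hSdef, Finset.mem_image] at hs
      obtain ⟨j, hj, rfl⟩ := hs
      have h1 := hxlt j
      have h2 := hx0 j hj
      have hyj : y j = min (b*j % r) (r - b*j % r) := by rw [hy]
      omega
    have step1 : ∑ k ∈ Finset.range 14, (k+1)*(r-(k+1)) ≤ ∑ s ∈ S, s*(r-s) := by
      have := reid_tri_sum r S hSmem
      rwa [hcard] at this
    have step2 : ∑ s ∈ S, s*(r-s) = ∑ j ∈ Finset.Icc 1 14, (b*j % r) * (r - b*j % r) := by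
      rw [hSdef, Finset.sum_image hinj]
      refine Finset.sum_congr rfl fun j hj => ?_
      have h1 := hxlt j
      rcases Nat.le_total (b*j % r) (r - b*j % r) with hle | hle
      · rw [Nat.min_eq_left hle]
      · rw [Nat.min_eq_right hle, Nat.sub_sub_self h1.le, Nat.mul_comm]
    have step3 : ∑ j ∈ Finset.Icc 1 14, (b*j % r) * (r - b*j % r)
        ≤ ∑ j ∈ Finset.range 15, (b*j % r) * (r - b*j % r) := by
      refine Finset.sum_le_sum_of_subset ?_
      intro j hj
      have := Finset.mem_Icc.mp hj
      exact Finset.mem_range.mpr (by omega)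
    have step0 : 58 * r < ∑ k ∈ Finset.range 14, (k+1)*(r-(k+1)) := by
      simp [Finset.sum_range_succ]
      omega
    omega

/-- For a basket `Q` of index `r ≥ 26`, `l(Q, 15) > 29`. -/
theorem basket_l_fifteen_gt' (Q : Basket) (h : 26 ≤ Q.r) : 29 < Q.l 15 := by
  have hr0 : 0 < Q.r := by omega
  haveI : NeZero Q.r := ⟨by omega⟩
  have hblt : Q.binv < Q.r := ZMod.val_lt _
  have hb : Nat.Coprime Q.binv Q.r := by
    unfold Basket.binv
    rw [← ZMod.coe_unitOfCoprime Q.a Q.coprime, ZMod.inv_coe_unit]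
    exact ZMod.val_coe_unit_coprime _
  have hT := reid_key Q.r Q.binv h hblt hb
  have hcast : Q.l 15 =
      ((∑ j ∈ Finset.range 15, (Q.binv*j % Q.r) * (Q.r - Q.binv*j % Q.r) : ℕ) : ℚ)
        / (2 * Q.r) := by
    unfold Basket.l reidL
    rw [Nat.cast_sum, Finset.sum_div]
    refine Finset.sum_congr rfl fun j _ => ?_
    have hx : Q.binv*j % Q.r ≤ Q.r := (Nat.mod_lt _ hr0).le
    rw [Nat.cast_mul, Nat.cast_sub hx]
  rw [hcast, lt_div_iff₀ (by positivity)]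
  have h29 : 29 * (2 * Q.r) < ∑ j ∈ Finset.range 15, (Q.binv*j % Q.r) * (Q.r - Q.binv*j % Q.r) := by
    omega
  exact_mod_cast h29

/-- For a basket `Q` of index `r ≥ 26`, `l(Q, 15) > 29`. -/
theorem basket_l_fifteen_gt (Q : Basket) (h : 26 ≤ Q.r) : 29 < Q.l 15 :=
  basket_l_fifteen_gt' Q h
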